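/- For n ≥ 2, the hypergeometric Laurent polynomial associated with the n-dimensional cross-polytope, p_n(x) = 1 + 2^{−2^{n−1}} Σ_{j=1}^n (x_j + x_j^{-1}), is optimal (i.e. the complement ℝ^n ∖ 𝒜_{p_n} has exactly 2n+1 connected components) if and only if n > 2. -/

import Mathlib

/-- The amoeba of a function on the complex torus `(ℂ∖{0})^n`. -/
def amoeba {n : ℕ} (f : (Fin n → ℂ) → ℂ) : Set (Fin n → ℝ) :=
  {ξ | ∃ x : Fin n → ℂ, (∀ j, x j ≠ 0) ∧ f x = 0 ∧
        ∀ j, ξ j = Real.log ‖x j‖}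

open Real Finset Set

noncomputable section
namespace CrossAmoeba


def Q (n : ℕ) : ℝ := 2 ^ (2 ^ (n - 1) - 1)

lemma Q_pos (n : ℕ) : 0 < Q n := pow_pos (by norm_num) _

lemma two_mul_Q {n : ℕ} (hn : 1 ≤ n) : (2 : ℝ) * Q n = 2 ^ (2 ^ (n - 1)) := by
  have h1 : 1 ≤ 2 ^ (n - 1) := Nat.one_le_two_pow
  rw [Q, ← pow_succ']
  congr 1
  omega

lemma two_le_Q {n : ℕ} (hn : 2 ≤ n) : 2 ≤ Q n := by
  have h1 : 1 ≤ 2 ^ (n - 1) - 1 := by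
    have : 2 ≤ 2 ^ (n - 1) := by
      calc 2 = 2 ^ 1 := rfl
        _ ≤ 2 ^ (n - 1) := Nat.pow_le_pow_right (by norm_num) (by omega)
    omega
  calc (2:ℝ) = 2 ^ 1 := by norm_num
    _ ≤ 2 ^ (2 ^ (n - 1) - 1) := by
        apply pow_le_pow_right₀ (by norm_num) h1

lemma lt_Q {n : ℕ} (hn : 3 ≤ n) : (n : ℝ) < Q n := by
  have h1 : ∀ m, 3 ≤ m → m + 1 ≤ 2 ^ (m - 1) := by
    intro m hm
    induction m, hm using Nat.le_induction with
    | base => norm_num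
    | succ m hm ih =>
      have : m + 1 - 1 = (m - 1) + 1 := by omega
      rw [this, pow_succ]
      omega
  have key : n < 2 ^ (2 ^ (n - 1) - 1) := by
    have h2 : n + 1 ≤ 2 ^ (n - 1) := h1 n hn
    calc n < 2 ^ n := Nat.lt_two_pow_self
      _ ≤ 2 ^ (2 ^ (n - 1) - 1) := Nat.pow_le_pow_right (by norm_num) (by omega)
  calc (n : ℝ) < ((2 ^ (2 ^ (n - 1) - 1) : ℕ) : ℝ) := by exact_mod_cast key
    _ = Q n := by rw [Q]; push_cast; ring


/-- key confocal identity: `|w-1| + |w+1| = |x| + |x|⁻¹` for `w = (x+x⁻¹)/2`. -/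
lemma abs_identity (x : ℂ) (hx : x ≠ 0) :
    ‖(x + x⁻¹) / 2 - 1‖ + ‖(x + x⁻¹) / 2 + 1‖ =
      ‖x‖ + (‖x‖)⁻¹ := by
  have h1 : (x + x⁻¹) / 2 - 1 = (x - 1) ^ 2 / (2 * x) := by field_simp; ring
  have h2 : (x + x⁻¹) / 2 + 1 = (x + 1) ^ 2 / (2 * x) := by field_simp; ring
  have hax : (0:ℝ) < ‖x‖ := norm_pos_iff.mpr hx
  have key : ‖x - 1‖ ^ 2 + ‖x + 1‖ ^ 2
      = 2 * ‖x‖ ^ 2 + 2 := by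
    rw [Complex.sq_norm, Complex.sq_norm, Complex.sq_norm]
    simp [Complex.normSq_apply, Complex.sub_re, Complex.sub_im, Complex.add_re,
      Complex.add_im]
    ring
  rw [h1, h2]
  rw [norm_div, norm_div, norm_pow, norm_pow, norm_mul]
  simp only [Complex.norm_two]
  rw [← add_div, key]
  field_simp

/-- monotonicity of `t ↦ |w+t| + |w-t|`. -/
lemma pair_mono (w : ℂ) {a : ℝ} (h0 : 0 ≤ a) (h1 : a ≤ 1) :
    ‖w + a‖ + ‖w - a‖ ≤
      ‖w + 1‖ + ‖w - 1‖ := by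
  have e1 : w + (a:ℂ) = (((1+a)/2 : ℝ) : ℂ) * (w + 1) + (((1-a)/2 : ℝ) : ℂ) * (w - 1) := by
    push_cast; ring
  have e2 : w - (a:ℂ) = (((1-a)/2 : ℝ) : ℂ) * (w + 1) + (((1+a)/2 : ℝ) : ℂ) * (w - 1) := by
    push_cast; ring
  have hp : (0:ℝ) ≤ (1+a)/2 := by linarith
  have hq : (0:ℝ) ≤ (1-a)/2 := by linarith
  calc ‖w + a‖ + ‖w - a‖
      ≤ ((1+a)/2) * ‖w + 1‖ + ((1-a)/2) * ‖w - 1‖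
        + (((1-a)/2) * ‖w + 1‖ + ((1+a)/2) * ‖w - 1‖) := by
        gcongr ?_ + ?_
        · rw [e1]
          refine (norm_add_le _ _).trans ?_
          rw [norm_mul, norm_mul, Complex.norm_real, Complex.norm_real, Real.norm_eq_abs,
            Real.norm_eq_abs, abs_of_nonneg hp, abs_of_nonneg hq]
        · rw [e2]
          refine (norm_add_le _ _).trans ?_
          rw [norm_mul, norm_mul, Complex.norm_real, Complex.norm_real, Real.norm_eq_abs,
            Real.norm_eq_abs, abs_of_nonneg hp, abs_of_nonneg hq]
    _ = ‖w + 1‖ + ‖w - 1‖ := by ring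

lemma abs_le_half (w : ℂ) :
    ‖w‖ ≤ (‖w - 1‖ + ‖w + 1‖) / 2 := by
  have : (2:ℂ) * w = (w - 1) + (w + 1) := by ring
  have h := norm_add_le (w - 1) (w + 1)
  rw [← this, norm_mul, Complex.norm_two] at h
  linarith


def Wset (n : ℕ) : Set (Fin n → ℝ) :=
  {ξ | Q n ≤ ∑ j, Real.cosh (ξ j) ∧
       ∀ k, Real.cosh (ξ k) ≤ Q n + ∑ i ∈ Finset.univ.erase k, Real.cosh (ξ i)}

lemma amoeba_subset {n : ℕ} (hn : 2 ≤ n) :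
    amoeba (fun x : Fin n → ℂ =>
      1 + ((2 : ℂ) ^ (2 ^ (n - 1)))⁻¹ * ∑ j, (x j + (x j)⁻¹)) ⊆ Wset n := by
  rintro ξ ⟨x, hx0, hfx, hξ⟩
  have hc0 : ((2:ℂ) ^ (2 ^ (n-1))) ≠ 0 := pow_ne_zero _ two_ne_zero
  simp only at hfx
  have hc2 : ((2:ℂ) ^ (2 ^ (n-1))) = ((2 * Q n : ℝ) : ℂ) := by
    rw [two_mul_Q (by omega : 1 ≤ n)]; push_cast; ring
  set w : Fin n → ℂ := fun j => (x j + (x j)⁻¹) / 2 with hw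
  have hsum : ∑ j, w j = -((Q n : ℝ) : ℂ) := by
    have hS : ∑ j, (x j + (x j)⁻¹) = -((2:ℂ) ^ (2 ^ (n-1))) := by
      have hcc := mul_inv_cancel₀ hc0
      linear_combination ((2:ℂ) ^ (2 ^ (n-1))) * hfx - (∑ j, (x j + (x j)⁻¹)) * hcc
    simp only [hw, ← Finset.sum_div, hS, hc2]
    push_cast
    ring
  have habs : ∀ j, Real.cosh (ξ j)
      = (‖w j - 1‖ + ‖w j + 1‖) / 2 := by
    intro j
    rw [hξ j, Real.cosh_log (norm_pos_iff.mpr (hx0 j)), ← abs_identity (x j) (hx0 j)]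
  constructor
  · have h1 : (Q n : ℝ) = ‖∑ j, w j‖ := by
      rw [hsum]
      simp [Complex.norm_real, abs_of_pos (Q_pos n)]
    rw [h1]
    refine (norm_sum_le _ _).trans ?_
    refine Finset.sum_le_sum fun j _ => ?_
    rw [habs j]
    have := abs_le_half (w j)
    linarith
  · intro k
    set a : ℝ := ((n:ℝ) - 1)⁻¹ with ha
    have hn1 : (1:ℝ) ≤ (n:ℝ) - 1 := by
      have : (2:ℝ) ≤ (n:ℝ) := by exact_mod_cast hn
      linarith
    have ha0 : 0 ≤ a := by rw [ha]; positivity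
    have ha1 : a ≤ 1 := by
      rw [ha]
      exact inv_le_one_of_one_le₀ hn1
    have hane : ((n:ℂ) - 1) ≠ 0 := by
      have : ((n:ℝ) - 1) ≠ 0 := by linarith
      intro h
      apply this
      have := congrArg Complex.re h
      simpa using this
    have hacard : ∑ _i ∈ Finset.univ.erase k, ((a:ℝ) : ℂ) = 1 := by
      rw [Finset.sum_const, Finset.card_erase_of_mem (Finset.mem_univ k),
        Finset.card_univ, Fintype.card_fin]
      rw [nsmul_eq_mul]
      have hcast : ((n - 1 : ℕ) : ℂ) = (n:ℂ) - 1 := by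
        have : 1 ≤ n := by omega
        push_cast [Nat.cast_sub this]
        ring
      rw [hcast, ha]
      push_cast
      field_simp
    have hwk : w k = -((Q n : ℝ):ℂ) - ∑ i ∈ Finset.univ.erase k, w i := by
      have h2 := Finset.add_sum_erase Finset.univ w (Finset.mem_univ k)
      linear_combination h2 + hsum
    have hb1 : ‖w k - 1‖
        ≤ Q n + ∑ i ∈ Finset.univ.erase k, ‖w i + (a:ℂ)‖ := by
      have he : w k - 1 = -(((Q n : ℝ):ℂ) + ∑ i ∈ Finset.univ.erase k, (w i + (a:ℂ))) := by
        rw [Finset.sum_add_distrib, hacard, hwk]; ring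
      rw [he, norm_neg]
      refine (norm_add_le _ _).trans ?_
      gcongr
      · rw [Complex.norm_real, Real.norm_eq_abs, abs_of_pos (Q_pos n)]
      · exact norm_sum_le _ _
    have hb2 : ‖w k + 1‖
        ≤ Q n + ∑ i ∈ Finset.univ.erase k, ‖w i - (a:ℂ)‖ := by
      have he : w k + 1 = -(((Q n : ℝ):ℂ) + ∑ i ∈ Finset.univ.erase k, (w i - (a:ℂ))) := by
        rw [Finset.sum_sub_distrib, hacard, hwk]; ring
      rw [he, norm_neg]
      refine (norm_add_le _ _).trans ?_
      gcongr
      · rw [Complex.norm_real, Real.norm_eq_abs, abs_of_pos (Q_pos n)]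
      · exact norm_sum_le _ _
    have hpair : ∑ i ∈ Finset.univ.erase k, (‖w i + (a:ℂ)‖ + ‖w i - (a:ℂ)‖)
        ≤ ∑ i ∈ Finset.univ.erase k, (2 * Real.cosh (ξ i)) := by
      refine Finset.sum_le_sum fun i _ => ?_
      have h := pair_mono (w i) ha0 ha1
      have h2 : ‖w i + 1‖ + ‖w i - 1‖ = 2 * Real.cosh (ξ i) := by
        rw [habs i]; ring
      linarith
    have hsplit : ∑ i ∈ Finset.univ.erase k,
          (‖w i + (a:ℂ)‖ + ‖w i - (a:ℂ)‖)
        = (∑ i ∈ Finset.univ.erase k, ‖w i + (a:ℂ)‖)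
          + ∑ i ∈ Finset.univ.erase k, ‖w i - (a:ℂ)‖ :=
      Finset.sum_add_distrib
    have hcsum : ∑ i ∈ Finset.univ.erase k, (2 * Real.cosh (ξ i))
        = 2 * ∑ i ∈ Finset.univ.erase k, Real.cosh (ξ i) := by
      rw [Finset.mul_sum]
    rw [habs k]
    linarith


lemma signed_sum_approx {ι : Type*} [DecidableEq ι] (s : Finset ι) (c : ι → ℝ) (m : ℝ)
    (hm : 0 ≤ m) (hc : ∀ i ∈ s, 0 ≤ c i ∧ c i ≤ m) (p : ℝ) (hp : |p| ≤ ∑ i ∈ s, c i) :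
    ∃ σ : ι → ℝ, (∀ i, σ i = 1 ∨ σ i = -1) ∧ |(∑ i ∈ s, σ i * c i) - p| ≤ m := by
  induction s using Finset.induction_on generalizing p with
  | empty =>
    refine ⟨fun _ => 1, fun _ => Or.inl rfl, ?_⟩
    simp only [Finset.sum_empty] at hp ⊢
    rw [zero_sub, abs_neg]
    linarith
  | @insert a s ha ih =>
    have hca := hc a (Finset.mem_insert_self a s)
    have hcs : ∀ i ∈ s, 0 ≤ c i ∧ c i ≤ m := fun i hi => hc i (Finset.mem_insert_of_mem hi)
    rw [Finset.sum_insert ha] at hp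
    by_cases h1 : |p| ≤ ∑ i ∈ s, c i
    · obtain ⟨σ, hσ, hd⟩ := ih hcs p h1
      set d : ℝ := (∑ i ∈ s, σ i * c i) - p with hdd
      set sgn : ℝ := if 0 ≤ d then -1 else 1 with hsgn
      refine ⟨Function.update σ a sgn, ?_, ?_⟩
      · intro i
        by_cases hia : i = a
        · subst hia
          rw [Function.update_self, hsgn]
          split <;> simp
        · rw [Function.update_of_ne hia]; exact hσ i
      · rw [Finset.sum_insert ha, Function.update_self]
        have hrest : ∑ i ∈ s, Function.update σ a sgn i * c i = ∑ i ∈ s, σ i * c i := by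
          refine Finset.sum_congr rfl fun i hi => ?_
          have hia : i ≠ a := by rintro rfl; exact ha hi
          rw [Function.update_of_ne hia]
        rw [hrest]
        have heq : sgn * c a + ∑ i ∈ s, σ i * c i - p = d + sgn * c a := by
          rw [hdd]; ring
        rw [heq, hsgn]
        rw [abs_le] at hd ⊢
        rcases le_or_gt 0 d with hd0 | hd0
        · rw [if_pos hd0]
          constructor <;> nlinarith [hca.1, hca.2, hd.1, hd.2]
        · rw [if_neg (not_le.mpr hd0)]
          constructor <;> nlinarith [hca.1, hca.2, hd.1, hd.2]
    · push_neg at h1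
      have h2 : 0 ≤ ∑ i ∈ s, c i := Finset.sum_nonneg fun i hi => (hcs i hi).1
      rw [abs_le] at hp
      rcases le_or_gt 0 p with hp0 | hp0
      · rw [abs_of_nonneg hp0] at h1
        refine ⟨fun _ => 1, fun _ => Or.inl rfl, ?_⟩
        have hsum : ∑ i ∈ insert a s, (1:ℝ) * c i = c a + ∑ i ∈ s, c i := by
          rw [Finset.sum_insert ha]; simp
        simp only [one_mul] at hsum ⊢
        rw [show (∑ i ∈ insert a s, c i) = c a + ∑ i ∈ s, c i from by
          rw [Finset.sum_insert ha]]
        rw [abs_le]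
        constructor <;> nlinarith [hca.1, hca.2, hp.1, hp.2]
      · rw [abs_of_neg hp0] at h1
        refine ⟨fun _ => -1, fun _ => Or.inr rfl, ?_⟩
        have hsum : ∑ i ∈ insert a s, (-1:ℝ) * c i = -(c a + ∑ i ∈ s, c i) := by
          rw [Finset.sum_insert ha, Finset.sum_congr rfl (fun i _ => rfl)]
          rw [show ∑ i ∈ s, (-1:ℝ) * c i = -∑ i ∈ s, c i from by
            rw [← Finset.sum_neg_distrib]; exact Finset.sum_congr rfl fun i _ => by ring]
          ring
        rw [hsum, abs_le]
        constructor <;> nlinarith [hca.1, hca.2, hp.1, hp.2]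

lemma two_ellipse (ξk ξl : ℝ) (h : |ξl| ≤ |ξk|) (R : ℝ)
    (h1 : Real.cosh ξk - Real.cosh ξl ≤ R) (h2 : R ≤ Real.cosh ξk + Real.cosh ξl) :
    ∃ α β : ℝ, Real.cosh ξk * Real.cos α + Real.cosh ξl * Real.cos β = R ∧
      Real.sinh ξk * Real.sin α + Real.sinh ξl * Real.sin β = 0 := by
  set μ : ℝ := if Real.sinh ξk = 0 then 0 else Real.sinh ξl / Real.sinh ξk with hμ
  have hμs : μ * Real.sinh ξk = Real.sinh ξl := by
    rw [hμ]
    split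
    · rename_i h0
      have hk0 : ξk = 0 := Real.sinh_eq_zero.mp h0
      have hl0 : ξl = 0 := by
        rw [hk0] at h
        simp only [abs_zero] at h
        exact abs_eq_zero.mp (le_antisymm h (abs_nonneg _))
      simp [hl0, h0]
    · rename_i h0
      field_simp
  have hμ1 : |μ| ≤ 1 := by
    rw [hμ]
    split
    · simp
    · rename_i h0
      rw [abs_div]
      rw [div_le_one (abs_pos.mpr h0)]
      rw [Real.abs_sinh, Real.abs_sinh]
      exact Real.sinh_le_sinh.mpr h
  set G : ℝ → ℝ := fun β =>
    Real.cosh ξk * Real.sqrt (1 - μ ^ 2 * Real.sin β ^ 2) + Real.cosh ξl * Real.cos β with hG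
  have hcont : Continuous G := by
    apply Continuous.add
    · exact continuous_const.mul ((continuous_const.sub
        (continuous_const.mul ((Real.continuous_sin).pow 2))).sqrt)
    · exact continuous_const.mul Real.continuous_cos
  have hG0 : G 0 = Real.cosh ξk + Real.cosh ξl := by
    simp [hG]
  have hGpi : G Real.pi = Real.cosh ξk - Real.cosh ξl := by
    simp [hG]
    ring
  have hiv := intermediate_value_Icc' Real.pi_nonneg hcont.continuousOn (a := 0) (b := Real.pi)
  rw [hG0, hGpi] at hiv
  obtain ⟨β, hβmem, hβ⟩ := hiv ⟨h1, h2⟩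
  have hms : |μ * Real.sin β| ≤ 1 := by
    rw [abs_mul]
    exact mul_le_one₀ hμ1 (abs_nonneg _) (abs_le.mpr ⟨Real.neg_one_le_sin β, Real.sin_le_one β⟩)
  refine ⟨Real.arcsin (-(μ * Real.sin β)), β, ?_, ?_⟩
  · have hcos : Real.cos (Real.arcsin (-(μ * Real.sin β)))
        = Real.sqrt (1 - μ ^ 2 * Real.sin β ^ 2) := by
      rw [Real.cos_arcsin]
      congr 1
      ring
    rw [hcos]
    exact hβ
  · have hsin : Real.sin (Real.arcsin (-(μ * Real.sin β))) = -(μ * Real.sin β) := by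
      apply Real.sin_arcsin
      · linarith [abs_le.mp hms]
      · linarith [abs_le.mp hms]
    rw [hsin]
    linear_combination (-Real.sin β) * hμs


lemma exists_theta {n : ℕ} (hn : 2 ≤ n) (ξ : Fin n → ℝ) (hW : ξ ∈ Wset n) :
    ∃ θ : Fin n → ℝ, (∑ j, Real.cosh (ξ j) * Real.cos (θ j)) = -(Q n) ∧
      (∑ j, Real.sinh (ξ j) * Real.sin (θ j)) = 0 := by
  obtain ⟨hi, hii⟩ := hW
  -- pick k with maximal |ξ|
  obtain ⟨k, -, hk⟩ := Finset.exists_max_image (Finset.univ : Finset (Fin n))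
    (fun j => |ξ j|) ⟨⟨0, by omega⟩, Finset.mem_univ _⟩
  have hek : (Finset.univ.erase k).Nonempty := by
    rw [← Finset.card_pos, Finset.card_erase_of_mem (Finset.mem_univ k),
      Finset.card_univ, Fintype.card_fin]
    omega
  obtain ⟨l, hlmem, hl⟩ := Finset.exists_max_image (Finset.univ.erase k)
    (fun j => |ξ j|) hek
  have hlk : l ≠ k := Finset.ne_of_mem_erase hlmem
  set s : Finset (Fin n) := (Finset.univ.erase k).erase l with hs
  set ck := Real.cosh (ξ k) with hck
  set cl := Real.cosh (ξ l) with hcl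
  set S := ∑ i ∈ s, Real.cosh (ξ i) with hS
  have hsplit1 : ∑ i ∈ Finset.univ.erase k, Real.cosh (ξ i) = cl + S :=
    (Finset.add_sum_erase _ (fun i => Real.cosh (ξ i)) hlmem).symm
  have hsplit : ∑ j, Real.cosh (ξ j) = ck + (cl + S) := by
    rw [← hsplit1]
    exact (Finset.add_sum_erase _ (fun i => Real.cosh (ξ i)) (Finset.mem_univ k)).symm
  have hcl1 : 1 ≤ cl := Real.one_le_cosh _
  have hck1 : 1 ≤ ck := Real.one_le_cosh _
  have hSnn : 0 ≤ S := Finset.sum_nonneg fun i _ => (Real.cosh_pos _).le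
  have hsc : ∀ i ∈ s, 0 ≤ Real.cosh (ξ i) ∧ Real.cosh (ξ i) ≤ cl := by
    intro i hi
    refine ⟨(Real.cosh_pos _).le, ?_⟩
    rw [hcl]
    rw [Real.cosh_le_cosh]
    exact hl i (Finset.mem_of_mem_erase hi)
  have hiik := hii k
  rw [hsplit1] at hiik
  -- find τ = signed sum over s in [ck - cl - Q, ck + cl - Q]
  have hτ : ∃ σ : Fin n → ℝ, (∀ i, σ i = 1 ∨ σ i = -1) ∧
      ck - cl - Q n ≤ (∑ i ∈ s, σ i * Real.cosh (ξ i)) ∧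
      (∑ i ∈ s, σ i * Real.cosh (ξ i)) ≤ ck + cl - Q n := by
    rcases le_or_gt (|ck - Q n|) S with hA | hA
    · obtain ⟨σ, hσ, hd⟩ := signed_sum_approx s (fun i => Real.cosh (ξ i)) cl
        (by linarith) hsc (ck - Q n) hA
      rw [abs_le] at hd
      exact ⟨σ, hσ, by constructor <;> linarith [hd.1, hd.2]⟩
    · rcases le_or_gt 0 (ck - Q n) with hsgn | hsgn
      · rw [abs_of_nonneg hsgn] at hA
        refine ⟨fun _ => 1, fun _ => Or.inl rfl, ?_⟩
        simp only [one_mul]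
        constructor
        · linarith
        · linarith
      · rw [abs_of_neg (by linarith)] at hA
        refine ⟨fun _ => -1, fun _ => Or.inr rfl, ?_⟩
        have : ∑ i ∈ s, (-1 : ℝ) * Real.cosh (ξ i) = -S := by
          rw [hS, ← Finset.sum_neg_distrib]
          exact Finset.sum_congr rfl fun i _ => by ring
        rw [this]
        constructor
        · linarith
        · linarith [hi, hsplit]
  obtain ⟨σ, hσ, hτ1, hτ2⟩ := hτ
  set τ := ∑ i ∈ s, σ i * Real.cosh (ξ i) with hτdef
  have hlek : |ξ l| ≤ |ξ k| := hk l (Finset.mem_univ l)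
  obtain ⟨α, β, hab1, hab2⟩ := two_ellipse (ξ k) (ξ l) hlek (Q n + τ)
    (by rw [← hck, ← hcl]; linarith) (by rw [← hck, ← hcl]; linarith)
  classical
  refine ⟨fun j => if j = k then Real.pi - α else if j = l then Real.pi - β
    else (if σ j = 1 then 0 else Real.pi), ?_, ?_⟩
  · have e1 : ∑ j, Real.cosh (ξ j) * Real.cos ((fun j => if j = k then Real.pi - α
        else if j = l then Real.pi - β else (if σ j = 1 then 0 else Real.pi)) j)
        = ck * Real.cos (Real.pi - α) + (cl * Real.cos (Real.pi - β) + τ) := by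
      rw [← Finset.add_sum_erase _ _ (Finset.mem_univ k)]
      simp only [if_pos rfl]
      congr 1
      rw [← Finset.add_sum_erase _ _ hlmem]
      simp only [if_neg hlk, if_pos rfl]
      congr 1
      refine Finset.sum_congr rfl fun i hi => ?_
      have hik : i ≠ k := Finset.ne_of_mem_erase (Finset.mem_of_mem_erase hi)
      have hil : i ≠ l := Finset.ne_of_mem_erase hi
      rw [if_neg hik, if_neg hil]
      rcases hσ i with h1 | h1 <;> rw [h1]
      · rw [if_pos rfl, Real.cos_zero]; ring
      · rw [if_neg (by norm_num), Real.cos_pi]; ring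
    rw [e1, Real.cos_pi_sub, Real.cos_pi_sub]
    rw [← hck, ← hcl] at hab1
    linarith [hab1]
  · have e2 : ∑ j, Real.sinh (ξ j) * Real.sin ((fun j => if j = k then Real.pi - α
        else if j = l then Real.pi - β else (if σ j = 1 then 0 else Real.pi)) j)
        = Real.sinh (ξ k) * Real.sin (Real.pi - α)
          + (Real.sinh (ξ l) * Real.sin (Real.pi - β) + 0) := by
      rw [← Finset.add_sum_erase _ _ (Finset.mem_univ k)]
      simp only [if_pos rfl]
      congr 1
      rw [← Finset.add_sum_erase _ _ hlmem]
      simp only [if_neg hlk, if_pos rfl]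
      congr 1
      refine Finset.sum_eq_zero fun i hi => ?_
      have hik : i ≠ k := Finset.ne_of_mem_erase (Finset.mem_of_mem_erase hi)
      have hil : i ≠ l := Finset.ne_of_mem_erase hi
      rw [if_neg hik, if_neg hil]
      rcases hσ i with h1 | h1 <;> rw [h1]
      · rw [if_pos rfl, Real.sin_zero, mul_zero]
      · rw [if_neg (by norm_num), Real.sin_pi, mul_zero]
    rw [e2, Real.sin_pi_sub, Real.sin_pi_sub]
    linarith [hab2]


lemma subset_amoeba {n : ℕ} (hn : 2 ≤ n) :
    Wset n ⊆ amoeba (fun x : Fin n → ℂ =>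
      1 + ((2 : ℂ) ^ (2 ^ (n - 1)))⁻¹ * ∑ j, (x j + (x j)⁻¹)) := by
  intro ξ hW
  obtain ⟨θ, hre, him⟩ := exists_theta hn ξ hW
  refine ⟨fun j => Complex.exp ((ξ j : ℂ) + (θ j : ℂ) * Complex.I), fun j =>
    Complex.exp_ne_zero _, ?_, ?_⟩
  · -- f x = 0
    have hterm : ∀ j, Complex.exp ((ξ j : ℂ) + (θ j : ℂ) * Complex.I)
        + (Complex.exp ((ξ j : ℂ) + (θ j : ℂ) * Complex.I))⁻¹
        = Complex.exp ((ξ j : ℂ) + (θ j : ℂ) * Complex.I)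
          + Complex.exp (-((ξ j : ℂ) + (θ j : ℂ) * Complex.I)) := by
      intro j
      rw [Complex.exp_neg]
    have hre' : ∀ j, (Complex.exp ((ξ j : ℂ) + (θ j : ℂ) * Complex.I)
        + Complex.exp (-((ξ j : ℂ) + (θ j : ℂ) * Complex.I))).re
        = 2 * Real.cosh (ξ j) * Real.cos (θ j) := by
      intro j
      rw [Complex.add_re, Complex.exp_re, Complex.exp_re]
      simp only [Complex.add_re, Complex.add_im, Complex.neg_re, Complex.neg_im,
        Complex.ofReal_re, Complex.ofReal_im, Complex.mul_re, Complex.mul_im,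
        Complex.I_re, Complex.I_im]
      rw [Real.cosh_eq]
      ring_nf
      rw [Real.cos_neg]
      ring
    have him' : ∀ j, (Complex.exp ((ξ j : ℂ) + (θ j : ℂ) * Complex.I)
        + Complex.exp (-((ξ j : ℂ) + (θ j : ℂ) * Complex.I))).im
        = 2 * Real.sinh (ξ j) * Real.sin (θ j) := by
      intro j
      rw [Complex.add_im, Complex.exp_im, Complex.exp_im]
      simp only [Complex.add_re, Complex.add_im, Complex.neg_re, Complex.neg_im,
        Complex.ofReal_re, Complex.ofReal_im, Complex.mul_re, Complex.mul_im,
        Complex.I_re, Complex.I_im]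
      rw [Real.sinh_eq]
      ring_nf
      rw [Real.sin_neg]
      ring
    have hc2 : ((2:ℂ) ^ (2 ^ (n-1))) = ((2 * Q n : ℝ) : ℂ) := by
      rw [two_mul_Q (by omega : 1 ≤ n)]; push_cast; ring
    have hc0 : ((2 * Q n : ℝ) : ℂ) ≠ 0 := by
      simp only [ne_eq, Complex.ofReal_eq_zero]
      have := Q_pos n
      intro h; linarith
    have hsum : ∑ j, (Complex.exp ((ξ j : ℂ) + (θ j : ℂ) * Complex.I)
        + (Complex.exp ((ξ j : ℂ) + (θ j : ℂ) * Complex.I))⁻¹)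
        = ((-(2 * Q n) : ℝ) : ℂ) := by
      apply Complex.ext
      · rw [Complex.re_sum]
        calc ∑ j, (Complex.exp ((ξ j : ℂ) + (θ j : ℂ) * Complex.I)
              + (Complex.exp ((ξ j : ℂ) + (θ j : ℂ) * Complex.I))⁻¹).re
            = ∑ j, 2 * Real.cosh (ξ j) * Real.cos (θ j) := by
              refine Finset.sum_congr rfl fun j _ => ?_
              rw [hterm j, hre' j]
          _ = 2 * ∑ j, Real.cosh (ξ j) * Real.cos (θ j) := by
              rw [Finset.mul_sum]; exact Finset.sum_congr rfl fun j _ => by ring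
          _ = ((-(2 * Q n) : ℝ) : ℂ).re := by
              rw [hre, Complex.ofReal_re]; ring
      · rw [Complex.im_sum]
        calc ∑ j, (Complex.exp ((ξ j : ℂ) + (θ j : ℂ) * Complex.I)
              + (Complex.exp ((ξ j : ℂ) + (θ j : ℂ) * Complex.I))⁻¹).im
            = ∑ j, 2 * Real.sinh (ξ j) * Real.sin (θ j) := by
              refine Finset.sum_congr rfl fun j _ => ?_
              rw [hterm j, him' j]
          _ = 2 * ∑ j, Real.sinh (ξ j) * Real.sin (θ j) := by
              rw [Finset.mul_sum]; exact Finset.sum_congr rfl fun j _ => by ring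
          _ = ((-(2 * Q n) : ℝ) : ℂ).im := by
              rw [him, Complex.ofReal_im]; ring
    simp only
    rw [hsum, hc2]
    rw [Complex.ofReal_neg]
    have hQne : ((Q n : ℝ) : ℂ) ≠ 0 := by
      simp only [ne_eq, Complex.ofReal_eq_zero]; exact (Q_pos n).ne'
    field_simp
    ring
  · intro j
    rw [Complex.norm_exp]
    simp only [Complex.add_re, Complex.ofReal_re, Complex.mul_re, Complex.I_re,
      Complex.ofReal_im, Complex.I_im]
    norm_num [Real.log_exp]


/-- If a space is a finite disjoint union of open connected nonempty sets,
the number of connected components equals the number of pieces. -/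
lemma card_components {X : Type*} [TopologicalSpace X] {ι : Type*} [Finite ι]
    (V : ι → Set X) (hop : ∀ i, IsOpen (V i)) (hconn : ∀ i, IsConnected (V i))
    (hdisj : ∀ i j, i ≠ j → Disjoint (V i) (V j)) (hcov : ⋃ i, V i = Set.univ) :
    Nat.card (ConnectedComponents X) = Nat.card ι := by
  have hclopen : ∀ i, IsClopen (V i) := by
    intro i
    refine ⟨?_, hop i⟩
    have hcompl : V i = (⋃ j ∈ ({i}ᶜ : Set ι), V j)ᶜ := by
      ext x
      constructor
      · intro hx
        simp only [Set.mem_compl_iff, Set.mem_iUnion]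
        rintro ⟨j, hj, hxj⟩
        exact ((hdisj i j (Ne.symm hj)).ne_of_mem hx hxj) rfl
      · intro hx
        have : x ∈ ⋃ j, V j := hcov ▸ Set.mem_univ x
        obtain ⟨j, hj⟩ := Set.mem_iUnion.mp this
        rcases eq_or_ne j i with rfl | hne
        · exact hj
        · exact absurd (Set.mem_iUnion₂.mpr ⟨j, hne, hj⟩) hx
    rw [hcompl]
    exact (isOpen_biUnion fun j _ => hop j).isClosed_compl
  have hcomp : ∀ i, ∀ x ∈ V i, connectedComponent x = V i := by
    intro i x hx
    refine subset_antisymm ((hclopen i).connectedComponent_subset hx)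
      ((hconn i).isPreconnected.subset_connectedComponent hx)
  have hpt : ∀ i, ∃ x, x ∈ V i := fun i => (hconn i).nonempty
  choose p hp using hpt
  have hbij : Function.Bijective (fun i => ConnectedComponents.mk (p i)) := by
    constructor
    · intro i j hij
      rw [ConnectedComponents.coe_eq_coe] at hij
      rw [hcomp i (p i) (hp i), hcomp j (p j) (hp j)] at hij
      by_contra hne
      exact (hdisj i j hne).ne_of_mem (hp i) (by rw [← hij]; exact hp i) rfl
    · intro c
      obtain ⟨x, rfl⟩ := ConnectedComponents.surjective_coe c
      have : x ∈ ⋃ i, V i := hcov ▸ Set.mem_univ x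
      obtain ⟨i, hi⟩ := Set.mem_iUnion.mp this
      refine ⟨i, ?_⟩
      rw [ConnectedComponents.coe_eq_coe, hcomp i (p i) (hp i), hcomp i x hi]
  exact (Nat.card_eq_of_bijective _ hbij).symm

/-- transfer preconnectedness to a subtype preimage -/
lemma isConnected_val_preimage {X : Type*} [TopologicalSpace X] {C U : Set X}
    (hUC : U ⊆ C) (h : IsConnected U) :
    IsConnected ((Subtype.val : C → X) ⁻¹' U) := by
  obtain ⟨⟨u, hu⟩, hpre⟩ := h
  constructor
  · exact ⟨⟨u, hUC hu⟩, hu⟩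
  · have himg : Subtype.val '' ((Subtype.val : C → X) ⁻¹' U) = U := by
      rw [Subtype.image_preimage_coe, Set.inter_eq_right.mpr hUC]
    rw [← Topology.IsInducing.subtypeVal.isPreconnected_image, himg]
    exact hpre


def U0 (n : ℕ) : Set (Fin n → ℝ) := {ξ | ∑ j, Real.cosh (ξ j) < Q n}

def Uten (n : ℕ) (k : Fin n) (ε : ℝ) : Set (Fin n → ℝ) :=
  {ξ | 0 < ε * ξ k ∧ Q n + ∑ i ∈ Finset.univ.erase k, Real.cosh (ξ i) < Real.cosh (ξ k)}

lemma cont_sum_cosh {n : ℕ} (t : Finset (Fin n)) :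
    Continuous fun ξ : Fin n → ℝ => ∑ j ∈ t, Real.cosh (ξ j) :=
  continuous_finset_sum _ fun j _ => Real.continuous_cosh.comp (continuous_apply j)

lemma U0_open (n : ℕ) : IsOpen (U0 n) := isOpen_lt (cont_sum_cosh _) continuous_const

lemma Uten_open (n : ℕ) (k : Fin n) (ε : ℝ) : IsOpen (Uten n k ε) := by
  apply IsOpen.inter
  · exact isOpen_lt continuous_const (continuous_const.mul (continuous_apply k))
  · exact isOpen_lt (continuous_const.add (cont_sum_cosh _))
      (Real.continuous_cosh.comp (continuous_apply k))

lemma sum_cosh_ge {n : ℕ} (t : Finset (Fin n)) (ξ : Fin n → ℝ) :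
    (t.card : ℝ) ≤ ∑ i ∈ t, Real.cosh (ξ i) := by
  calc (t.card : ℝ) = ∑ _i ∈ t, (1:ℝ) := by rw [Finset.sum_const, nsmul_eq_mul, mul_one]
    _ ≤ ∑ i ∈ t, Real.cosh (ξ i) := Finset.sum_le_sum fun i _ => Real.one_le_cosh _

lemma sum_cosh_nonneg {n : ℕ} (t : Finset (Fin n)) (ξ : Fin n → ℝ) :
    0 ≤ ∑ i ∈ t, Real.cosh (ξ i) :=
  Finset.sum_nonneg fun i _ => (Real.cosh_pos _).le

lemma U0_subset (n : ℕ) : U0 n ⊆ (Wset n)ᶜ := fun ξ h hW => absurd hW.1 (not_le.mpr h)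

lemma Uten_subset (n : ℕ) (k : Fin n) (ε : ℝ) : Uten n k ε ⊆ (Wset n)ᶜ :=
  fun ξ h hW => absurd (hW.2 k) (not_le.mpr h.2)

lemma cover {n : ℕ} (hn : 2 ≤ n) (ξ : Fin n → ℝ) (h : ξ ∉ Wset n) :
    ξ ∈ U0 n ∨ ∃ k : Fin n, ∃ ε : ℝ, (ε = 1 ∨ ε = -1) ∧ ξ ∈ Uten n k ε := by
  rw [Wset, Set.mem_setOf_eq, not_and_or] at h
  rcases h with h | h
  · exact Or.inl (not_le.mp h)
  · push_neg at h
    obtain ⟨k, hk⟩ := h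
    right
    have hne : ξ k ≠ 0 := by
      intro h0
      rw [h0, Real.cosh_zero] at hk
      have := two_le_Q hn
      have := sum_cosh_nonneg (Finset.univ.erase k) ξ
      linarith
    rcases lt_or_gt_of_ne hne with hneg | hpos
    · exact ⟨k, -1, Or.inr rfl, ⟨by nlinarith, hk⟩⟩
    · exact ⟨k, 1, Or.inl rfl, ⟨by nlinarith, hk⟩⟩

lemma disj_U0_Uten (n : ℕ) (k : Fin n) (ε : ℝ) : Disjoint (U0 n) (Uten n k ε) := by
  rw [Set.disjoint_left]
  intro ξ h0 ht
  have hsplit : ∑ j, Real.cosh (ξ j)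
      = Real.cosh (ξ k) + ∑ i ∈ Finset.univ.erase k, Real.cosh (ξ i) :=
    (Finset.add_sum_erase _ (fun i => Real.cosh (ξ i)) (Finset.mem_univ k)).symm
  have h1 := ht.2
  have h2 := sum_cosh_nonneg (Finset.univ.erase k) ξ
  have h3 := Q_pos n
  rw [U0, Set.mem_setOf_eq, hsplit] at h0
  linarith

lemma disj_Uten_Uten {n : ℕ} {k k' : Fin n} (hkk : k ≠ k') (ε ε' : ℝ) :
    Disjoint (Uten n k ε) (Uten n k' ε') := by
  rw [Set.disjoint_left]
  intro ξ h1 h2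
  have hk'mem : k' ∈ Finset.univ.erase k := Finset.mem_erase.mpr ⟨hkk.symm, Finset.mem_univ _⟩
  have hkmem : k ∈ Finset.univ.erase k' := Finset.mem_erase.mpr ⟨hkk, Finset.mem_univ _⟩
  have e1 : Real.cosh (ξ k') ≤ ∑ i ∈ Finset.univ.erase k, Real.cosh (ξ i) :=
    Finset.single_le_sum (fun i _ => (Real.cosh_pos _).le) hk'mem
  have e2 : Real.cosh (ξ k) ≤ ∑ i ∈ Finset.univ.erase k', Real.cosh (ξ i) :=
    Finset.single_le_sum (fun i _ => (Real.cosh_pos _).le) hkmem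
  have := Q_pos n
  have := h1.2
  have := h2.2
  linarith

lemma disj_Uten_sign {n : ℕ} (k : Fin n) : Disjoint (Uten n k 1) (Uten n k (-1)) := by
  rw [Set.disjoint_left]
  intro ξ h1 h2
  have := h1.1
  have := h2.1
  nlinarith

lemma U0_nonempty {n : ℕ} (hn : 3 ≤ n) : (0 : Fin n → ℝ) ∈ U0 n := by
  rw [U0, Set.mem_setOf_eq]
  have : ∑ j : Fin n, Real.cosh ((0 : Fin n → ℝ) j) = n := by
    simp [Real.cosh_zero]
  rw [this]
  exact lt_Q hn

def tentPt (n : ℕ) (k : Fin n) (ε : ℝ) : Fin n → ℝ :=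
  fun j => if j = k then ε * Real.arsinh (Q n + n) else 0

lemma tentPt_mem {n : ℕ} (hn : 2 ≤ n) (k : Fin n) {ε : ℝ} (hε : ε = 1 ∨ ε = -1) :
    tentPt n k ε ∈ Uten n k ε := by
  set T := Real.arsinh (Q n + n) with hT
  have hQn : (0:ℝ) < Q n + n := by
    have := Q_pos n
    have : (0:ℝ) ≤ n := Nat.cast_nonneg n
    linarith [Q_pos n]
  have hTpos : 0 < T := by
    rw [hT]
    rw [← Real.arsinh_zero]
    exact Real.arsinh_lt_arsinh.mpr hQn
  have hcoshT : Q n + n ≤ Real.cosh T := by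
    have h1 : Real.sinh T = Q n + n := Real.sinh_arsinh _
    have := Real.sinh_lt_cosh T
    linarith
  constructor
  · have : (tentPt n k ε) k = ε * T := by rw [tentPt, if_pos rfl]
    rw [this]
    rcases hε with h | h <;> rw [h] <;> nlinarith
  · have hk : (tentPt n k ε) k = ε * T := by rw [tentPt, if_pos rfl]
    have hsum : ∑ i ∈ Finset.univ.erase k, Real.cosh (tentPt n k ε i)
        = (n : ℝ) - 1 := by
      rw [Finset.sum_congr rfl (fun i hi => by
        rw [tentPt, if_neg (Finset.ne_of_mem_erase hi), Real.cosh_zero])]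
      rw [Finset.sum_const, Finset.card_erase_of_mem (Finset.mem_univ k),
        Finset.card_univ, Fintype.card_fin, nsmul_eq_mul, mul_one]
      have : 1 ≤ n := by omega
      push_cast [Nat.cast_sub this]
      ring
    rw [hk, hsum]
    have hcosh_eq : Real.cosh (ε * T) = Real.cosh T := by
      rcases hε with h | h <;> rw [h]
      · rw [one_mul]
      · rw [neg_one_mul, Real.cosh_neg]
    rw [hcosh_eq]
    have : (1:ℝ) ≤ n := by exact_mod_cast (by omega : 1 ≤ n)
    linarith


lemma U0_connected {n : ℕ} (hn : 3 ≤ n) : IsConnected (U0 n) := by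
  have h0 : (0 : Fin n → ℝ) ∈ U0 n := U0_nonempty hn
  have hpath : IsPathConnected (U0 n) := by
    refine ⟨0, h0, ?_⟩
    intro ξ hξ
    apply JoinedIn.of_segment_subset
    rintro z ⟨a, b, ha, hb, hab, rfl⟩
    rw [U0, Set.mem_setOf_eq]
    have hle : ∀ j, Real.cosh ((a • (0:Fin n → ℝ) + b • ξ) j) ≤ Real.cosh (ξ j) := by
      intro j
      simp only [Pi.add_apply, Pi.smul_apply, Pi.zero_apply, smul_eq_mul, mul_zero, zero_add]
      rw [Real.cosh_le_cosh, abs_mul]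
      calc |b| * |ξ j| ≤ 1 * |ξ j| := by
            apply mul_le_mul_of_nonneg_right _ (abs_nonneg _)
            rw [abs_of_nonneg hb]; linarith
        _ = |ξ j| := one_mul _
    calc ∑ j, Real.cosh ((a • (0:Fin n → ℝ) + b • ξ) j) ≤ ∑ j, Real.cosh (ξ j) :=
          Finset.sum_le_sum fun j _ => hle j
      _ < Q n := hξ
  exact hpath.isConnected

lemma Uten_connected {n : ℕ} (hn : 2 ≤ n) (k : Fin n) {ε : ℝ} (hε : ε = 1 ∨ ε = -1) :
    IsConnected (Uten n k ε) := by
  set T := Real.arsinh (Q n + n) with hT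
  have hε2 : ε * ε = 1 := by rcases hε with h | h <;> rw [h] <;> norm_num
  have habsε : |ε| = 1 := by rcases hε with h | h <;> rw [h] <;> norm_num
  have hp := tentPt_mem hn k hε
  have hTpos : 0 < ε * tentPt n k ε k := hp.1
  have hpath : IsPathConnected (Uten n k ε) := by
    refine ⟨tentPt n k ε, hp, ?_⟩
    intro ξ hξ
    have hmid : (fun j => if j = k then ξ k else 0) ∈ Uten n k ε := by
      constructor
      · simp only [if_pos rfl]
        exact hξ.1
      · simp only [if_pos rfl]
        have hsum0 : ∑ i ∈ Finset.univ.erase k,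
            Real.cosh ((fun j => if j = k then ξ k else 0) i)
            ≤ ∑ i ∈ Finset.univ.erase k, Real.cosh (ξ i) := by
          refine Finset.sum_le_sum fun i hi => ?_
          have hz : (fun j => if j = k then ξ k else 0) i = 0 :=
            if_neg (Finset.ne_of_mem_erase hi)
          rw [hz, Real.cosh_zero]
          exact Real.one_le_cosh _
        exact lt_of_le_of_lt (by linarith [hξ.2]) hξ.2
    have hT2 : Q n + n ≤ Real.cosh T := by
      have h1 : Real.sinh T = Q n + n := Real.sinh_arsinh _
      linarith [Real.sinh_lt_cosh T]
    have hTpos' : 0 < T := by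
      rw [hT, ← Real.arsinh_zero]
      refine Real.arsinh_lt_arsinh.mpr ?_
      have h0n : (0:ℝ) ≤ n := Nat.cast_nonneg n
      linarith [Q_pos n]
    have hsum_erase_ge : (n:ℝ) - 1 ≤ ∑ i ∈ Finset.univ.erase k, Real.cosh (ξ i) := by
      have h2 := sum_cosh_ge (Finset.univ.erase k) ξ
      rw [Finset.card_erase_of_mem (Finset.mem_univ k), Finset.card_univ,
        Fintype.card_fin] at h2
      have h1 : ((n - 1 : ℕ):ℝ) = (n:ℝ) - 1 := by
        have : 1 ≤ n := by omega
        push_cast [Nat.cast_sub this]; ring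
      linarith [h2, h1.ge, h1.le]
    have j1 : JoinedIn (Uten n k ε) ξ (fun j => if j = k then ξ k else 0) := by
      apply JoinedIn.of_segment_subset
      rintro z ⟨a, b, ha, hb, hab, rfl⟩
      have hzk : (a • ξ + b • (fun j => if j = k then ξ k else 0)) k = ξ k := by
        simp only [Pi.add_apply, Pi.smul_apply, smul_eq_mul, eq_self_iff_true, if_true]
        linear_combination (ξ k) * hab
      constructor
      · rw [hzk]; exact hξ.1
      · rw [hzk]
        have hzi : ∀ i ∈ Finset.univ.erase k,
            Real.cosh ((a • ξ + b • fun j => if j = k then ξ k else 0) i)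
              ≤ Real.cosh (ξ i) := by
          intro i hi
          have hz : (a • ξ + b • fun j => if j = k then ξ k else 0) i = a * ξ i := by
            simp only [Pi.add_apply, Pi.smul_apply, smul_eq_mul,
              if_neg (Finset.ne_of_mem_erase hi)]
            ring
          rw [hz, Real.cosh_le_cosh, abs_mul]
          calc |a| * |ξ i| ≤ 1 * |ξ i| :=
                mul_le_mul_of_nonneg_right (by rw [abs_of_nonneg ha]; linarith)
                  (abs_nonneg _)
            _ = |ξ i| := one_mul _
        calc Q n + ∑ i ∈ Finset.univ.erase k,
              Real.cosh ((a • ξ + b • fun j => if j = k then ξ k else 0) i)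
            ≤ Q n + ∑ i ∈ Finset.univ.erase k, Real.cosh (ξ i) := by
              have := Finset.sum_le_sum hzi
              linarith
          _ < Real.cosh (ξ k) := hξ.2
    have j2 : JoinedIn (Uten n k ε) (fun j => if j = k then ξ k else 0) (tentPt n k ε) := by
      apply JoinedIn.of_segment_subset
      rintro z ⟨a, b, ha, hb, hab, rfl⟩
      have hzk : (a • (fun j => if j = k then ξ k else 0) + b • tentPt n k ε) k
          = a * ξ k + b * (ε * T) := by
        simp only [Pi.add_apply, Pi.smul_apply, smul_eq_mul, tentPt, eq_self_iff_true,
          if_true, ← hT]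
      have hεzk : ε * (a * ξ k + b * (ε * T)) = a * (ε * ξ k) + b * T := by
        linear_combination (b * T) * hε2
      have hu : 0 < ε * (a * ξ k + b * (ε * T)) := by
        rw [hεzk]
        rcases eq_or_lt_of_le ha with hrfl | ha'
        · have hb1 : b = 1 := by linarith
          rw [← hrfl, hb1]
          simpa using hTpos'
        · have h1 : 0 < a * (ε * ξ k) := mul_pos ha' hξ.1
          have h2 : 0 ≤ b * T := mul_nonneg hb hTpos'.le
          linarith
      have habs : |a * ξ k + b * (ε * T)| = a * (ε * ξ k) + b * T := by
        rw [← hεzk]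
        rw [← abs_of_pos hu, abs_mul, habsε, one_mul]
      have hcoshz : ∀ v : ℝ, 0 < v → v ≤ a * (ε * ξ k) + b * T →
          Real.cosh v ≤ Real.cosh (a * ξ k + b * (ε * T)) := by
        intro v hv hvle
        rw [Real.cosh_le_cosh, habs, abs_of_pos hv]
        exact hvle
      have hzsum : ∑ i ∈ Finset.univ.erase k,
          Real.cosh ((a • (fun j => if j = k then ξ k else 0) + b • tentPt n k ε) i)
          = (n:ℝ) - 1 := by
        rw [Finset.sum_congr rfl (fun i hi => by
          have hz : (a • (fun j => if j = k then ξ k else 0) + b • tentPt n k ε) i = 0 := by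
            simp only [Pi.add_apply, Pi.smul_apply, smul_eq_mul, tentPt,
              if_neg (Finset.ne_of_mem_erase hi)]
            ring
          rw [hz, Real.cosh_zero])]
        rw [Finset.sum_const, Finset.card_erase_of_mem (Finset.mem_univ k),
          Finset.card_univ, Fintype.card_fin, nsmul_eq_mul, mul_one]
        have : 1 ≤ n := by omega
        push_cast [Nat.cast_sub this]
        ring
      constructor
      · rw [hzk]; exact hu
      · rw [hzk, hzsum]
        have hcoshξ : Real.cosh (ε * ξ k) = Real.cosh (ξ k) := by
          rcases hε with h | h <;> rw [h]
          · rw [one_mul]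
          · rw [neg_one_mul, Real.cosh_neg]
        rcases le_total (ε * ξ k) T with hmin | hmin
        · have h1 : ε * ξ k ≤ a * (ε * ξ k) + b * T := by nlinarith [hξ.1]
          have h2 := hcoshz (ε * ξ k) hξ.1 h1
          rw [hcoshξ] at h2
          have h3 := hξ.2
          linarith
        · have h1 : T ≤ a * (ε * ξ k) + b * T := by nlinarith [hξ.1]
          have h2 := hcoshz T hTpos' h1
          have hn1 : (1:ℝ) ≤ n := by exact_mod_cast (by omega : 1 ≤ n)
          linarith
    exact (j1.trans j2).symm
  exact hpath.isConnected


def epsb (b : Bool) : ℝ := if b then 1 else -1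

lemma epsb_or (b : Bool) : epsb b = 1 ∨ epsb b = -1 := by
  cases b
  · exact Or.inr rfl
  · exact Or.inl rfl

lemma epsb_inj : ∀ b b' : Bool, b ≠ b' → (epsb b = 1 ∧ epsb b' = -1) ∨ (epsb b = -1 ∧ epsb b' = 1) := by
  rintro (_|_) (_|_) h <;> simp_all [epsb]

lemma card_compl_ge3 {n : ℕ} (hn : 3 ≤ n) :
    Nat.card (ConnectedComponents ↥((Wset n)ᶜ)) = 2 * n + 1 := by
  have hn2 : 2 ≤ n := by omega
  set V : Option (Fin n × Bool) → Set ↥((Wset n)ᶜ) :=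
    fun i => Option.elim i ((Subtype.val : ↥((Wset n)ᶜ) → _) ⁻¹' (U0 n))
      (fun kb => (Subtype.val : ↥((Wset n)ᶜ) → _) ⁻¹' (Uten n kb.1 (epsb kb.2))) with hV
  have hcard : Nat.card (ConnectedComponents ↥((Wset n)ᶜ))
      = Nat.card (Option (Fin n × Bool)) := by
    apply card_components V
    · rintro (_ | ⟨k, b⟩)
      · exact (U0_open n).preimage continuous_subtype_val
      · exact (Uten_open n k _).preimage continuous_subtype_val
    · rintro (_ | ⟨k, b⟩)
      · exact isConnected_val_preimage (U0_subset n) (U0_connected hn)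
      · exact isConnected_val_preimage (Uten_subset n k _) (Uten_connected hn2 k (epsb_or b))
    · rintro (_ | ⟨k, b⟩) (_ | ⟨k', b'⟩) hne
      · exact absurd rfl hne
      · exact (disj_U0_Uten n k' (epsb b')).preimage _
      · exact ((disj_U0_Uten n k (epsb b)).symm).preimage _
      · rcases eq_or_ne k k' with rfl | hkk
        · have hbb : b ≠ b' := by
            intro h
            exact hne (by rw [h])
          rcases epsb_inj b b' hbb with ⟨h1, h2⟩ | ⟨h1, h2⟩
          · simp only [hV, Option.elim]
            rw [h1, h2]
            exact (disj_Uten_sign k).preimage _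
          · simp only [hV, Option.elim]
            rw [h1, h2]
            exact ((disj_Uten_sign k).symm).preimage _
        · exact (disj_Uten_Uten hkk _ _).preimage _
    · ext ⟨ξ, hξ⟩
      simp only [Set.mem_iUnion, Set.mem_univ, iff_true]
      rcases cover hn2 ξ hξ with h | ⟨k, ε, hε, h⟩
      · exact ⟨none, h⟩
      · rcases hε with rfl | rfl
        · exact ⟨some (k, true), by simpa [hV, epsb] using h⟩
        · exact ⟨some (k, false), by simpa [hV, epsb] using h⟩
  rw [hcard, Nat.card_eq_fintype_card]
  simp [Fintype.card_option, Fintype.card_prod]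
  omega

lemma Q_two : Q 2 = 2 := by norm_num [Q]

lemma card_compl_two :
    Nat.card (ConnectedComponents ↥((Wset 2)ᶜ)) = 4 := by
  set V : (Fin 2 × Bool) → Set ↥((Wset 2)ᶜ) :=
    fun kb => (Subtype.val : ↥((Wset 2)ᶜ) → _) ⁻¹' (Uten 2 kb.1 (epsb kb.2)) with hV
  have hcard : Nat.card (ConnectedComponents ↥((Wset 2)ᶜ))
      = Nat.card (Fin 2 × Bool) := by
    apply card_components V
    · rintro ⟨k, b⟩
      exact (Uten_open 2 k _).preimage continuous_subtype_val
    · rintro ⟨k, b⟩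
      exact isConnected_val_preimage (Uten_subset 2 k _) (Uten_connected le_rfl k (epsb_or b))
    · rintro ⟨k, b⟩ ⟨k', b'⟩ hne
      rcases eq_or_ne k k' with rfl | hkk
      · have hbb : b ≠ b' := by
          intro h
          exact hne (by rw [h])
        rcases epsb_inj b b' hbb with ⟨h1, h2⟩ | ⟨h1, h2⟩
        · simp only [hV]
          rw [h1, h2]
          exact (disj_Uten_sign k).preimage _
        · simp only [hV]
          rw [h1, h2]
          exact ((disj_Uten_sign k).symm).preimage _
      · exact (disj_Uten_Uten hkk _ _).preimage _
    · ext ⟨ξ, hξ⟩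
      simp only [Set.mem_iUnion, Set.mem_univ, iff_true]
      rcases cover le_rfl ξ hξ with h | ⟨k, ε, hε, h⟩
      · exfalso
        have h2 := sum_cosh_ge (Finset.univ : Finset (Fin 2)) ξ
        rw [Finset.card_univ, Fintype.card_fin] at h2
        rw [U0, Set.mem_setOf_eq, Q_two, Fin.sum_univ_two] at h
        norm_num at h2
        linarith
      · rcases hε with rfl | rfl
        · exact ⟨(k, true), by simpa [hV, epsb] using h⟩
        · exact ⟨(k, false), by simpa [hV, epsb] using h⟩
  rw [hcard, Nat.card_eq_fintype_card]
  simp [Fintype.card_prod]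

end CrossAmoeba

open CrossAmoeba in
/-- The hypergeometric Laurent polynomial of the `n`-dimensional cross-polytope,
`pₙ(x) = 1 + 2^{−2^{n−1}} Σⱼ (xⱼ + xⱼ⁻¹)`, is optimal — the complement of its
amoeba has exactly `2n+1` connected components — if and only if `n > 2`. -/
theorem cross_polytope_hypergeometric_optimal_iff {n : ℕ} (hn : 2 ≤ n) :
    Nat.card
        (ConnectedComponents
          ↥(amoeba fun x : Fin n → ℂ =>
              1 + ((2 : ℂ) ^ (2 ^ (n - 1)))⁻¹ * ∑ j, (x j + (x j)⁻¹))ᶜ) =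
        2 * n + 1 ↔
      2 < n := by
  have hEq : amoeba (fun x : Fin n → ℂ =>
      1 + ((2 : ℂ) ^ (2 ^ (n - 1)))⁻¹ * ∑ j, (x j + (x j)⁻¹)) = Wset n :=
    subset_antisymm (amoeba_subset hn) (subset_amoeba hn)
  rw [hEq]
  rcases eq_or_lt_of_le hn with h2 | h3
  · have hn2 : n = 2 := h2.symm
    subst hn2
    rw [card_compl_two]
    norm_num
  · rw [card_compl_ge3 h3]
    exact iff_of_true rfl h3
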